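/- (Stability condition, Lemma 5.1 'Lemma mu1<1' of the paper.) Define the reflection coefficient κ(ρ) = (γ p(ρ) u'(ρ) − c(ρ) p'(ρ)) / (γ p(ρ) u'(ρ) + c(ρ) p'(ρ)) along the compressive branch, where primes denote d/dρ. Then for every ρ ∈ (ρ_r, η ρ_r) one has λ₄(ρ) − s(ρ) > 0, where λ₁(ρ) = u(ρ) − c(ρ) and λ₄(ρ) = u(ρ) + c(ρ), and the strict inequality |κ(ρ)| · |λ₁(ρ) − s(ρ)| / |λ₄(ρ) − s(ρ)| < 1 holds. -/

import Mathlib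

set_option maxHeartbeats 2000000 in
theorem stmt12 (γ ρr ur pr η cr : ℝ)
    (hγ : 1 < γ) (hρr : 0 < ρr) (hpr : 0 < pr)
    (hη : η = (γ + 1) / (γ - 1))
    (hcr : cr = Real.sqrt (γ * pr / ρr))
    (p u c s κ : ℝ → ℝ)
    (hp : ∀ ρ, p ρ = pr * (η * ρ - ρr) / (η * ρr - ρ))
    (hu : ∀ ρ, u ρ = ur + cr * Real.sqrt (2 / (γ - 1)) * (ρ - ρr)
        / Real.sqrt ((η * ρr - ρ) * ρ))
    (hc : ∀ ρ, c ρ = Real.sqrt (γ * p ρ / ρ))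
    (hs : ∀ ρ, s ρ = (ρ * u ρ - ρr * ur) / (ρ - ρr))
    (hκ : ∀ ρ, κ ρ = (γ * p ρ * deriv u ρ - c ρ * deriv p ρ)
        / (γ * p ρ * deriv u ρ + c ρ * deriv p ρ)) :
    ∀ ρ ∈ Set.Ioo ρr (η * ρr),
      0 < (u ρ + c ρ) - s ρ
      ∧ |κ ρ| * |(u ρ - c ρ) - s ρ| / |(u ρ + c ρ) - s ρ| < 1 := by
  intro ρ hρ
  obtain ⟨h1, h2⟩ := hρ
  have hγ1 : (0:ℝ) < γ - 1 := by linarith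
  have hρ0 : 0 < ρ := lt_trans hρr h1
  have hd : 0 < η * ρr - ρ := by linarith
  have hη1 : 1 < η := by rw [hη, lt_div_iff₀ hγ1]; linarith
  have hγη : η * (γ - 1) = γ + 1 := by rw [hη]; field_simp
  have hγηe : γ * η = γ + η + 1 := by linear_combination hγη
  have hn : 0 < η * ρ - ρr := by nlinarith [mul_pos (sub_pos.2 hη1) hρ0]
  have hP : 0 < p ρ := by rw [hp]; exact div_pos (mul_pos hpr hn) hd
  set K := cr * Real.sqrt (2 / (γ - 1)) with hKdef
  have hcr0 : 0 < cr := by rw [hcr]; exact Real.sqrt_pos.2 (by positivity)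
  have hK0 : 0 < K := mul_pos hcr0 (Real.sqrt_pos.2 (by positivity))
  have hK2 : K ^ 2 = γ * pr * (η - 1) / ρr := by
    rw [hKdef, mul_pow, hcr, Real.sq_sqrt (by positivity), Real.sq_sqrt (by positivity), hη]
    field_simp
    ring
  have hg0 : 0 < (η * ρr - ρ) * ρ := mul_pos hd hρ0
  set sg := Real.sqrt ((η * ρr - ρ) * ρ) with hsgdef
  have hsg0 : 0 < sg := Real.sqrt_pos.2 hg0
  have hsg2 : sg ^ 2 = (η * ρr - ρ) * ρ := Real.sq_sqrt hg0.le
  -- derivative of p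
  have hdp : deriv p ρ = pr * ρr * (η ^ 2 - 1) / (η * ρr - ρ) ^ 2 := by
    have hpd : HasDerivAt p (pr * ρr * (η ^ 2 - 1) / (η * ρr - ρ) ^ 2) ρ := by
      have ha : HasDerivAt (fun x => pr * (η * x - ρr)) (pr * η) ρ := by
        have := (((hasDerivAt_id ρ).const_mul η).sub_const ρr).const_mul pr
        exact this.congr_deriv (by simp)
      have hb : HasDerivAt (fun x => η * ρr - x) (-1) ρ := by
        have := (hasDerivAt_const ρ (η * ρr)).sub (hasDerivAt_id ρ)
        exact this.congr_deriv (by simp)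
      have hdiv := ha.div hb hd.ne'
      have heq : (fun x => pr * (η * x - ρr) / (η * ρr - x)) = p := by
        funext x; rw [hp x]
      simp only [Pi.div_def] at hdiv
      rw [heq] at hdiv
      refine hdiv.congr_deriv ?_
      field_simp
      ring
    exact hpd.deriv
  -- derivative of u
  have hdu : deriv u ρ = K * ρr * (η * ρ + η * ρr - 2 * ρ)
      / (2 * sg * ((η * ρr - ρ) * ρ)) := by
    set g : ℝ → ℝ := fun x => (η * ρr - x) * x with hgdef
    have hgρ : g ρ = (η * ρr - ρ) * ρ := rfl
    have hg0' : 0 < g ρ := hg0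
    have hgd : HasDerivAt g (η * ρr - 2 * ρ) ρ := by
      have := ((hasDerivAt_const ρ (η * ρr)).sub (hasDerivAt_id ρ)).mul (hasDerivAt_id ρ)
      exact this.congr_deriv (by simp; ring)
    have hsqd : HasDerivAt (fun x => Real.sqrt (g x)) ((η * ρr - 2 * ρ) / (2 * sg)) ρ := by
      have h := (Real.hasDerivAt_sqrt hg0'.ne').comp ρ hgd
      refine h.congr_deriv ?_
      rw [hsgdef, ← hgρ]
      field_simp
    have hnum : HasDerivAt (fun x => K * (x - ρr)) K ρ := by
      simpa using ((hasDerivAt_id ρ).sub_const ρr).const_mul K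
    have hud : HasDerivAt u
        ((K * sg - K * (ρ - ρr) * ((η * ρr - 2 * ρ) / (2 * sg))) / sg ^ 2) ρ := by
      have h := (hnum.div hsqd hsg0.ne').const_add ur
      have heq : (fun x => ur + K * (x - ρr) / Real.sqrt (g x)) = u := by
        funext x; rw [hu x]
      simp only [Pi.div_def] at h
      rw [heq] at h
      exact h
    rw [hud.deriv, hsg2]
    field_simp
    linear_combination (2 / (ρr * η - ρ)) * hsg2
  -- basic quantities
  have hc2 : c ρ ^ 2 = γ * p ρ / ρ := by
    rw [hc]; exact Real.sq_sqrt (by positivity)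
  have hc0 : 0 < c ρ := by rw [hc]; exact Real.sqrt_pos.2 (by positivity)
  set M := ρr * K / sg with hMdef
  have hM0 : 0 < M := by positivity
  have hM : s ρ - u ρ = M := by
    have huρ : u ρ = ur + K * (ρ - ρr) / sg := by rw [hu]
    rw [hs, huρ, hMdef]
    have hne : ρ - ρr ≠ 0 := sub_ne_zero.mpr h1.ne'
    field_simp
    ring
  have hT : 0 < η * ρ + η * ρr - 2 * ρ := by
    nlinarith [mul_pos (sub_pos.2 hη1) hρ0]
  have hdu0 : 0 < deriv u ρ := by
    rw [hdu]; exact div_pos (mul_pos (mul_pos hK0 hρr) hT) (by positivity)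
  have hdp0 : 0 < deriv p ρ := by
    rw [hdp]; exact div_pos (by nlinarith [mul_pos (mul_pos hpr hρr) (show (0:ℝ) < η^2-1 by nlinarith)]) (by positivity)
  have hA0 : 0 < γ * p ρ * deriv u ρ := mul_pos (mul_pos (by linarith) hP) hdu0
  have hB0 : 0 < c ρ * deriv p ρ := mul_pos hc0 hdp0
  -- M < c (Lax condition)
  have hM2 : M ^ 2 = γ * pr * (η - 1) * ρr / ((η * ρr - ρ) * ρ) := by
    rw [hMdef, div_pow, hsg2, mul_pow, hK2]
    field_simp
  have hc2' : c ρ ^ 2 = γ * pr * (η * ρ - ρr) / ((η * ρr - ρ) * ρ) := by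
    rw [hc2, hp]
    field_simp
  have hMc : M < c ρ := by
    refine lt_of_pow_lt_pow_left₀ 2 hc0.le ?_
    rw [hM2, hc2', div_lt_div_iff₀ hg0 hg0]
    nlinarith [mul_pos hg0 (mul_pos (mul_pos (by linarith : (0:ℝ) < γ) hpr) (sub_pos.2 h1))]
  -- key inequality 2 : A * M < B * c
  have e1 : γ * p ρ * deriv u ρ * M
      = γ ^ 2 * p ρ * pr * (η - 1) * ρr * (η * ρ + η * ρr - 2 * ρ)
        / (2 * ((η * ρr - ρ) * ρ) ^ 2) := by
    calc γ * p ρ * deriv u ρ * M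
        = γ * p ρ * K ^ 2 * ρr ^ 2 * (η * ρ + η * ρr - 2 * ρ) / (2 * (sg ^ 2) ^ 2) := by
          rw [hdu, hMdef]
          rw [show (2 * sg * ((η * ρr - ρ) * ρ)) = 2 * sg * sg ^ 2 by rw [hsg2]]
          field_simp
      _ = γ ^ 2 * p ρ * pr * (η - 1) * ρr * (η * ρ + η * ρr - 2 * ρ)
            / (2 * ((η * ρr - ρ) * ρ) ^ 2) := by
          rw [hsg2, hK2]
          field_simp
  have e2 : c ρ * deriv p ρ * c ρ
      = γ * p ρ * (pr * ρr * (η ^ 2 - 1)) / (ρ * (η * ρr - ρ) ^ 2) := by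
    have : c ρ * deriv p ρ * c ρ = c ρ ^ 2 * deriv p ρ := by ring
    rw [this, hc2, hdp]
    field_simp
  have hscal2 : γ * (η - 1) * (η * ρ + η * ρr - 2 * ρ) * ρ < 2 * (η ^ 2 - 1) * ρ ^ 2 := by
    have e2id : 2 * (η ^ 2 - 1) * ρ ^ 2 - γ * (η - 1) * (η * ρ + η * ρr - 2 * ρ) * ρ
        = (η - 1) * (γ + η + 1) * ρ * (ρ - ρr) := by
      linear_combination (-(η - 1) * ρ * (ρ + ρr)) * hγηe
    have pos : 0 < (η - 1) * (γ + η + 1) * ρ * (ρ - ρr) :=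
      mul_pos (mul_pos (mul_pos (sub_pos.2 hη1) (by linarith)) hρ0) (sub_pos.2 h1)
    linarith [e2id, pos]
  have key2 : γ * p ρ * deriv u ρ * M < c ρ * deriv p ρ * c ρ := by
    rw [e1, e2, div_lt_div_iff₀ (by positivity) (by positivity)]
    linarith [mul_lt_mul_of_pos_left hscal2
      (by positivity : (0:ℝ) < γ * p ρ * pr * ρr * (η * ρr - ρ) ^ 2)]
  -- key inequality 3 : B * M < A * c
  have hη2pos : 0 < (η - 2) * ρ + ρr := by
    rcases le_or_gt 2 η with h | h
    · have h3 : 0 ≤ (η - 2) * ρ := mul_nonneg (by linarith) hρ0.le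
      linarith
    · have h3 : (η - 2) * (η * ρr) < (η - 2) * ρ := by
        exact mul_lt_mul_of_neg_left h2 (by linarith)
      have h4 : (η - 2) * (η * ρr) + ρr = ρr * (η - 1) ^ 2 := by ring
      have h5 : 0 < ρr * (η - 1) ^ 2 := mul_pos hρr (pow_pos (sub_pos.2 hη1) 2)
      linarith
  have hscal3 : 2 * pr * ρr * (η ^ 2 - 1) * ((η * ρr - ρ) * ρ)
      < γ * (pr * (η * ρ - ρr)) * (η * ρr - ρ) * (η * ρ + η * ρr - 2 * ρ) := by
    have hprod : 0 < (ρ - ρr) * ((η - 2) * ρ + ρr) :=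
      mul_pos (sub_pos.2 h1) hη2pos
    have e3id : γ * (pr * (η * ρ - ρr)) * (η * ρr - ρ) * (η * ρ + η * ρr - 2 * ρ)
          - 2 * pr * ρr * (η ^ 2 - 1) * ((η * ρr - ρ) * ρ)
        = pr * (η * ρr - ρ) * (γ * η * ((ρ - ρr) * ((η - 2) * ρ + ρr))) := by
      linear_combination (2 * (η - 1) * ρ * ρr * pr * (η * ρr - ρ)) * hγηe
    have pos : 0 < pr * (η * ρr - ρ) * (γ * η * ((ρ - ρr) * ((η - 2) * ρ + ρr))) :=
      mul_pos (mul_pos hpr hd)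
        (mul_pos (mul_pos (by linarith) (by linarith)) hprod)
    linarith [e3id, pos]
  have key3' : deriv p ρ * M < γ * p ρ * deriv u ρ := by
    have e3 : deriv p ρ * M = pr * ρr ^ 2 * (η ^ 2 - 1) * K / ((η * ρr - ρ) ^ 2 * sg) := by
      rw [hdp, hMdef]
      field_simp
    have e4 : γ * p ρ * deriv u ρ
        = γ * pr * (η * ρ - ρr) * K * ρr * (η * ρ + η * ρr - 2 * ρ)
          / (2 * sg * ρ * (η * ρr - ρ) ^ 2) := by
      rw [hp, hdu]
      field_simp
    rw [e3, e4, div_lt_div_iff₀ (by positivity) (by positivity)]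
    linarith [mul_lt_mul_of_pos_left hscal3
      (by positivity : (0:ℝ) < ρr * K * sg * (η * ρr - ρ))]
  have key3 : c ρ * deriv p ρ * M < γ * p ρ * deriv u ρ * c ρ := by
    linarith [mul_lt_mul_of_pos_left key3' hc0]
  -- assemble
  have hgoal1 : 0 < (u ρ + c ρ) - s ρ := by
    have := hM; linarith [hMc]
  refine ⟨hgoal1, ?_⟩
  have habs1 : |(u ρ - c ρ) - s ρ| = c ρ + M := by
    rw [abs_of_nonpos (by linarith)]
    linarith
  have habs2 : |(u ρ + c ρ) - s ρ| = c ρ - M := by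
    rw [abs_of_pos hgoal1]
    linarith
  have hABpos : 0 < γ * p ρ * deriv u ρ + c ρ * deriv p ρ := by linarith
  have hκabs : |κ ρ| = |γ * p ρ * deriv u ρ - c ρ * deriv p ρ|
      / (γ * p ρ * deriv u ρ + c ρ * deriv p ρ) := by
    rw [hκ, abs_div, abs_of_pos hABpos]
  rw [hκabs, habs1, habs2, div_mul_eq_mul_div, div_div,
    div_lt_one (mul_pos hABpos (by linarith))]
  rcases abs_cases (γ * p ρ * deriv u ρ - c ρ * deriv p ρ) with ⟨he, _⟩ | ⟨he, _⟩ <;>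
    rw [he] <;> linarith [key2, key3]
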